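/- Let R be a ring, N a left R-module, and M₁, M₂ pure submodules of N. Then there exist submodules M₀ ≤ M₁′ of N with M₁ ≤ M₁′, M₀ ≤ M₂, both M₀ and M₁′ pure in N, |M₀| ≤ |M₁| + |R| + ℵ₀, and such that the canonical map t : (M₁′ ⊕ M₂)/{(m, −m) : m ∈ M₀} → N, t([(a, b)]) = a + b, is a pure embedding. -/
import Mathlib


universe u v

/-- A submodule `A ≤ M` is pure if every finite system of `R`-linear equations with
parameters in `A` that is solvable in `M` is solvable in `A`. -/
def IsPureSubmodule (R : Type u) [Ring R] {M : Type v} [AddCommGroup M] [Module R M]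
    (A : Submodule R M) : Prop :=
  ∀ (k n : ℕ) (c : Fin k → Fin n → R) (a : Fin k → M),
    (∀ i, a i ∈ A) →
    (∃ x : Fin n → M, ∀ i, (∑ j, c i j • x j) = a i) →
    ∃ x : Fin n → M, (∀ j, x j ∈ A) ∧ ∀ i, (∑ j, c i j • x j) = a i

/-- A linear map is a pure embedding if it is injective and its range is a pure submodule. -/
def IsPureEmbedding (R : Type u) [Ring R] {M N : Type v} [AddCommGroup M] [Module R M]
    [AddCommGroup N] [Module R N] (f : M →ₗ[R] N) : Prop :=
  Function.Injective f ∧ IsPureSubmodule R (LinearMap.range f)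

/-- A module is pure-injective if it is a direct summand of every module containing it
as a pure submodule, i.e. every pure embedding out of it admits a retraction. -/
def IsPureInjective (R : Type u) [Ring R] (M : Type v) [AddCommGroup M] [Module R M] : Prop :=
  ∀ (N : Type v) [AddCommGroup N] [Module R N] (f : M →ₗ[R] N),
    IsPureEmbedding R f → ∃ g : N →ₗ[R] M, g ∘ₗ f = LinearMap.id

/-- A module is absolutely pure if it is pure in every module containing it. -/
def IsAbsolutelyPure (R : Type u) [Ring R] (M : Type v) [AddCommGroup M] [Module R M] : Prop :=
  ∀ (N : Type v) [AddCommGroup N] [Module R N] (f : M →ₗ[R] N),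
    Function.Injective f → IsPureSubmodule R (LinearMap.range f)

namespace Stmt14Aux

open Cardinal

variable {R : Type u} [Ring R] {N : Type u} [AddCommGroup N] [Module R N]

open Classical in
noncomputable def pick {n : ℕ} (P : (Fin n → N) → Prop) : Fin n → N :=
  if h : ∃ x, P x then h.choose else fun _ => 0

theorem pick_spec {n : ℕ} {P : (Fin n → N) → Prop} (h : ∃ x, P x) : P (pick P) := by
  unfold pick
  rw [dif_pos h]
  exact h.choose_spec

/-- predicate: exact solution of the system. -/
def P1 (k n : ℕ) (c : Fin k → Fin n → R) (a : Fin k → N) : (Fin n → N) → Prop :=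
  fun x => ∀ i, (∑ j, c i j • x j) = a i

/-- predicate: solution lying in `M₂`. -/
def P2 (M₂ : Submodule R N) (k n : ℕ) (c : Fin k → Fin n → R) (a : Fin k → N) :
    (Fin n → N) → Prop :=
  fun x => (∀ j, x j ∈ M₂) ∧ ∀ i, (∑ j, c i j • x j) = a i

/-- predicate: solution modulo `M₂`. -/
def P3 (M₂ : Submodule R N) (k n : ℕ) (c : Fin k → Fin n → R) (a : Fin k → N) :
    (Fin n → N) → Prop :=
  fun x => ∀ i, (∑ j, c i j • x j) - a i ∈ M₂

/-- Index type for witnesses over a submodule `A`. -/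
def Wit (A : Submodule R N) : Type u :=
  Σ kn : ULift.{u} (ℕ × ℕ),
    (Fin kn.down.1 → Fin kn.down.2 → R) × (Fin kn.down.1 → A) ×
      ULift.{u} (Fin kn.down.2 × Fin 3)

/-- The witness function. -/
noncomputable def witFun (M₂ A : Submodule R N) : Wit A → N := fun t =>
  if t.2.2.2.down.2 = 0 then
    pick (P1 t.1.down.1 t.1.down.2 t.2.1 (fun i => (t.2.2.1 i : N))) t.2.2.2.down.1
  else if t.2.2.2.down.2 = 1 then
    pick (P2 M₂ t.1.down.1 t.1.down.2 t.2.1 (fun i => (t.2.2.1 i : N))) t.2.2.2.down.1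
  else
    pick (P3 M₂ t.1.down.1 t.1.down.2 t.2.1 (fun i => (t.2.2.1 i : N))) t.2.2.2.down.1

/-- One closure step. -/
noncomputable def step (M₂ A : Submodule R N) : Submodule R N :=
  A ⊔ Submodule.span R (Set.range (witFun M₂ A))

theorem le_step {M₂ A : Submodule R N} : A ≤ step M₂ A := le_sup_left

theorem wit_mem (M₂ A : Submodule R N) (t : Wit A) : witFun M₂ A t ∈ step M₂ A :=
  Submodule.mem_sup_right (Submodule.subset_span (Set.mem_range_self t))

theorem step_sol1 {M₂ A : Submodule R N} {k n : ℕ} {c : Fin k → Fin n → R} {a : Fin k → N}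
    (ha : ∀ i, a i ∈ A) (hsol : ∃ x : Fin n → N, ∀ i, (∑ j, c i j • x j) = a i) :
    ∃ x : Fin n → N, (∀ j, x j ∈ step M₂ A) ∧ ∀ i, (∑ j, c i j • x j) = a i := by
  refine ⟨pick (P1 k n c a), fun j => ?_, pick_spec (P := P1 k n c a) hsol⟩
  have h : pick (P1 k n c a) j
      = witFun M₂ A ⟨⟨(k, n)⟩, c, fun i => ⟨a i, ha i⟩, ⟨(j, 0)⟩⟩ := rfl
  rw [h]
  exact wit_mem M₂ A _

theorem step_sol2 {M₂ A : Submodule R N} {k n : ℕ} {c : Fin k → Fin n → R} {a : Fin k → N}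
    (ha : ∀ i, a i ∈ A)
    (hsol : ∃ x : Fin n → N, (∀ j, x j ∈ M₂) ∧ ∀ i, (∑ j, c i j • x j) = a i) :
    ∃ x : Fin n → N, (∀ j, x j ∈ step M₂ A ∧ x j ∈ M₂) ∧ ∀ i, (∑ j, c i j • x j) = a i := by
  have hs := pick_spec (P := P2 M₂ k n c a) hsol
  refine ⟨pick (P2 M₂ k n c a), fun j => ⟨?_, hs.1 j⟩, hs.2⟩
  have h : pick (P2 M₂ k n c a) j
      = witFun M₂ A ⟨⟨(k, n)⟩, c, fun i => ⟨a i, ha i⟩, ⟨(j, 1)⟩⟩ := rfl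
  rw [h]
  exact wit_mem M₂ A _

theorem step_sol3 {M₂ A : Submodule R N} {k n : ℕ} {c : Fin k → Fin n → R} {a : Fin k → N}
    (ha : ∀ i, a i ∈ A)
    (hsol : ∃ x : Fin n → N, ∀ i, (∑ j, c i j • x j) - a i ∈ M₂) :
    ∃ x : Fin n → N, (∀ j, x j ∈ step M₂ A) ∧ ∀ i, (∑ j, c i j • x j) - a i ∈ M₂ := by
  refine ⟨pick (P3 M₂ k n c a), fun j => ?_, pick_spec (P := P3 M₂ k n c a) hsol⟩
  have h : pick (P3 M₂ k n c a) j
      = witFun M₂ A ⟨⟨(k, n)⟩, c, fun i => ⟨a i, ha i⟩, ⟨(j, 2)⟩⟩ := rfl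
  rw [h]
  exact wit_mem M₂ A _

/-- The ω-chain. -/
noncomputable def chain (M₁ M₂ : Submodule R N) : ℕ → Submodule R N
  | 0 => M₁
  | n + 1 => step M₂ (chain M₁ M₂ n)

theorem chain_mono (M₁ M₂ : Submodule R N) : Monotone (chain M₁ M₂) :=
  monotone_nat_of_le_succ fun _ => le_step

/-- The union of the chain. -/
noncomputable def Mbig (M₁ M₂ : Submodule R N) : Submodule R N := ⨆ n, chain M₁ M₂ n

theorem chain_le_Mbig (M₁ M₂ : Submodule R N) (m : ℕ) : chain M₁ M₂ m ≤ Mbig M₁ M₂ :=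
  le_iSup (chain M₁ M₂) m

theorem mem_Mbig {M₁ M₂ : Submodule R N} {x : N} :
    x ∈ Mbig M₁ M₂ ↔ ∃ m, x ∈ chain M₁ M₂ m :=
  Submodule.mem_iSup_of_chain ⟨chain M₁ M₂, chain_mono M₁ M₂⟩ x

theorem exists_stage {M₁ M₂ : Submodule R N} {k : ℕ} {a : Fin k → N}
    (ha : ∀ i, a i ∈ Mbig M₁ M₂) : ∃ m, ∀ i, a i ∈ chain M₁ M₂ m := by
  choose f hf using fun i => mem_Mbig.mp (ha i)
  exact ⟨Finset.univ.sup f, fun i =>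
    chain_mono M₁ M₂ (Finset.le_sup (Finset.mem_univ i)) (hf i)⟩

theorem Mbig_pure (M₁ M₂ : Submodule R N) : IsPureSubmodule R (Mbig M₁ M₂) := by
  intro k n c a ha hsol
  obtain ⟨m, hm⟩ := exists_stage ha
  obtain ⟨x, hx, hxe⟩ := step_sol1 (M₂ := M₂) hm hsol
  exact ⟨x, fun j => chain_le_Mbig M₁ M₂ (m + 1) (hx j), hxe⟩

theorem inf_pure (M₁ M₂ : Submodule R N) (h₂ : IsPureSubmodule R M₂) :
    IsPureSubmodule R (Mbig M₁ M₂ ⊓ M₂) := by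
  intro k n c a ha hsol
  obtain ⟨m, hm⟩ := exists_stage (M₁ := M₁) (M₂ := M₂)
    (fun i => (Submodule.mem_inf.mp (ha i)).1)
  have hsol2 := h₂ k n c a (fun i => (Submodule.mem_inf.mp (ha i)).2) hsol
  obtain ⟨x, hx, hxe⟩ := step_sol2 hm hsol2
  exact ⟨x, fun j => Submodule.mem_inf.mpr
    ⟨chain_le_Mbig M₁ M₂ (m + 1) (hx j).1, (hx j).2⟩, hxe⟩

theorem sup_pure (M₁ M₂ : Submodule R N) (h₂ : IsPureSubmodule R M₂) :
    IsPureSubmodule R (Mbig M₁ M₂ ⊔ M₂) := by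
  intro k n c a ha hsol
  choose b hb cc hcc hbc using fun i => Submodule.mem_sup.mp (ha i)
  obtain ⟨m, hm⟩ := exists_stage hb
  obtain ⟨w, hw⟩ := hsol
  have h3 : ∃ x : Fin n → N, ∀ i, (∑ j, c i j • x j) - b i ∈ M₂ := by
    refine ⟨w, fun i => ?_⟩
    have h : (∑ j, c i j • w j) - b i = cc i := by rw [hw i, ← hbc i]; abel
    rw [h]; exact hcc i
  obtain ⟨u, hu, hue⟩ := step_sol3 hm h3
  have hdM : ∀ i, (a i - ∑ j, c i j • u j) ∈ M₂ := by
    intro i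
    have h : a i - (∑ j, c i j • u j) = cc i - ((∑ j, c i j • u j) - b i) := by
      rw [← hbc i]; abel
    rw [h]; exact Submodule.sub_mem _ (hcc i) (hue i)
  have hdsol : ∃ x : Fin n → N, ∀ i, (∑ j, c i j • x j) = a i - ∑ j, c i j • u j := by
    refine ⟨fun j => w j - u j, fun i => ?_⟩
    simp only [smul_sub, Finset.sum_sub_distrib, hw i]
  obtain ⟨v, hv, hve⟩ := h₂ k n c _ hdM hdsol
  refine ⟨fun j => u j + v j, fun j => Submodule.add_mem _
    (Submodule.mem_sup_left (chain_le_Mbig M₁ M₂ (m + 1) (hu j)))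
    (Submodule.mem_sup_right (hv j)), fun i => ?_⟩
  have h : (∑ j, c i j • (u j + v j)) = (∑ j, c i j • u j) + ∑ j, c i j • v j := by
    simp only [smul_add, Finset.sum_add_distrib]
  rw [h, hve i]; abel

/-! ### Cardinality bounds -/

theorem mk_fin_fun_le {X : Type u} {κ : Cardinal.{u}} (hX : #X ≤ κ) (hκ : ℵ₀ ≤ κ) (k : ℕ) :
    #(Fin k → X) ≤ κ := by
  rw [Cardinal.mk_arrow, Cardinal.lift_uzero, Cardinal.mk_fin, Cardinal.lift_natCast]
  calc (#X) ^ (k : Cardinal.{u}) ≤ κ ^ (k : Cardinal.{u}) :=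
        Cardinal.power_le_power_right hX
    _ ≤ max κ ℵ₀ := Cardinal.power_nat_le_max
    _ = κ := max_eq_left hκ

theorem mk_Wit_le {A : Submodule R N} {κ : Cardinal.{u}} (hA : #A ≤ κ) (hR : #R ≤ κ)
    (hκ : ℵ₀ ≤ κ) : #(Wit A) ≤ κ := by
  have hsummand : ∀ kn : ULift.{u} (ℕ × ℕ),
      #((Fin kn.down.1 → Fin kn.down.2 → R) × (Fin kn.down.1 → A) ×
        ULift.{u} (Fin kn.down.2 × Fin 3)) ≤ κ := by
    intro kn
    have h1 : #(Fin kn.down.1 → Fin kn.down.2 → R) ≤ κ :=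
      mk_fin_fun_le (mk_fin_fun_le hR hκ _) hκ _
    have h2 : #(Fin kn.down.1 → A) ≤ κ := mk_fin_fun_le hA hκ _
    have h3 : #(ULift.{u} (Fin kn.down.2 × Fin 3)) ≤ κ :=
      le_trans (Cardinal.lt_aleph0_of_finite _).le hκ
    calc #((Fin kn.down.1 → Fin kn.down.2 → R) × (Fin kn.down.1 → A) ×
            ULift.{u} (Fin kn.down.2 × Fin 3))
        = #(Fin kn.down.1 → Fin kn.down.2 → R) *
            (#(Fin kn.down.1 → A) * #(ULift.{u} (Fin kn.down.2 × Fin 3))) := by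
          simp only [Cardinal.mk_prod, Cardinal.lift_id]
      _ ≤ κ * (κ * κ) := mul_le_mul' h1 (mul_le_mul' h2 h3)
      _ = κ := by rw [Cardinal.mul_eq_self hκ, Cardinal.mul_eq_self hκ]
  have h : #(Wit A) = Cardinal.sum fun kn : ULift.{u} (ℕ × ℕ) =>
      #((Fin kn.down.1 → Fin kn.down.2 → R) × (Fin kn.down.1 → A) ×
        ULift.{u} (Fin kn.down.2 × Fin 3)) := Cardinal.mk_sigma _
  rw [h]
  calc Cardinal.sum (fun kn : ULift.{u} (ℕ × ℕ) =>
          #((Fin kn.down.1 → Fin kn.down.2 → R) × (Fin kn.down.1 → A) ×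
            ULift.{u} (Fin kn.down.2 × Fin 3)))
      ≤ Cardinal.sum (fun _ : ULift.{u} (ℕ × ℕ) => κ) := Cardinal.sum_le_sum _ _ hsummand
    _ = #(ULift.{u} (ℕ × ℕ)) * κ := Cardinal.sum_const' _ _
    _ ≤ κ * κ := mul_le_mul' (le_trans Cardinal.mk_le_aleph0 hκ) le_rfl
    _ = κ := Cardinal.mul_eq_self hκ

theorem mk_span_le {s : Set N} {κ : Cardinal.{u}} (hs : #s ≤ κ) (hR : #R ≤ κ)
    (hκ : ℵ₀ ≤ κ) : #(Submodule.span R s) ≤ κ := by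
  have h1 : #(Submodule.span R s) ≤ #(s →₀ R) := by
    rw [Finsupp.span_eq_range_linearCombination]
    exact Cardinal.mk_range_le
  refine h1.trans ?_
  rcases subsingleton_or_nontrivial R with hR' | hR'
  · haveI : Subsingleton (s →₀ R) := ⟨fun f g => Finsupp.ext fun _ => Subsingleton.elim _ _⟩
    exact le_trans Cardinal.mk_le_aleph0 hκ
  · have emb : (s →₀ R) ↪ ((ULift.{u} ℕ ⊕ s) →₀ R) :=
      ⟨Finsupp.embDomain ⟨Sum.inr, Sum.inr_injective⟩, Finsupp.embDomain_injective _⟩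
    refine le_trans (Cardinal.mk_le_of_injective emb.injective) ?_
    rw [Cardinal.mk_finsupp_of_infinite]
    refine max_le ?_ hR
    rw [Cardinal.mk_sum, Cardinal.lift_id, Cardinal.lift_id]
    calc #(ULift.{u} ℕ) + #s ≤ κ + κ :=
          add_le_add (le_trans Cardinal.mk_le_aleph0 hκ) hs
      _ = κ := Cardinal.add_eq_self hκ

theorem mk_step_le {M₂ A : Submodule R N} {κ : Cardinal.{u}} (hA : #A ≤ κ) (hR : #R ≤ κ)
    (hκ : ℵ₀ ≤ κ) : #(step M₂ A) ≤ κ := by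
  have hspan : step M₂ A = Submodule.span R ((A : Set N) ∪ Set.range (witFun M₂ A)) := by
    rw [Submodule.span_union, Submodule.span_eq]
    rfl
  rw [hspan]
  apply mk_span_le _ hR hκ
  refine (Cardinal.mk_union_le _ _).trans ?_
  have h2 : #(Set.range (witFun M₂ A)) ≤ κ :=
    Cardinal.mk_range_le.trans (mk_Wit_le hA hR hκ)
  calc #(A : Set N) + #(Set.range (witFun M₂ A)) ≤ κ + κ := add_le_add hA h2
    _ = κ := Cardinal.add_eq_self hκ

theorem mk_Mbig_le (M₁ M₂ : Submodule R N) :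
    #(Mbig M₁ M₂) ≤ #M₁ + #R + ℵ₀ := by
  set κ : Cardinal.{u} := #M₁ + #R + ℵ₀ with hκdef
  have hκ : ℵ₀ ≤ κ := le_add_self
  have hR : #R ≤ κ := le_trans le_add_self (self_le_add_right _ _)
  have hM1 : (#M₁ : Cardinal.{u}) ≤ κ :=
    le_trans (self_le_add_right _ _) (self_le_add_right _ _)
  have hchain : ∀ m, #(chain M₁ M₂ m) ≤ κ := by
    intro m
    induction m with
    | zero => exact hM1
    | succ m ih => exact mk_step_le ih hR hκ
  have hcoe : ((Mbig M₁ M₂ : Submodule R N) : Set N) = ⋃ m, (chain M₁ M₂ m : Set N) :=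
    Submodule.coe_iSup_of_chain ⟨chain M₁ M₂, chain_mono M₁ M₂⟩
  have hre : (⋃ m, (chain M₁ M₂ m : Set N)) = ⋃ m : ULift.{u} ℕ, (chain M₁ M₂ m.down : Set N) := by
    ext x
    simp only [Set.mem_iUnion]
    exact ⟨fun ⟨m, hm⟩ => ⟨⟨m⟩, hm⟩, fun ⟨m, hm⟩ => ⟨m.down, hm⟩⟩
  calc #(Mbig M₁ M₂)
      = #(⋃ m : ULift.{u} ℕ, (chain M₁ M₂ m.down : Set N)) := by
        exact Cardinal.mk_congr (Equiv.setCongr (hcoe.trans hre))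
    _ ≤ #(ULift.{u} ℕ) * ⨆ m : ULift.{u} ℕ, #(chain M₁ M₂ m.down : Set N) :=
        Cardinal.mk_iUnion_le _
    _ ≤ κ * κ := mul_le_mul' (le_trans Cardinal.mk_le_aleph0 hκ)
        (ciSup_le' fun m => hchain m.down)
    _ = κ := Cardinal.mul_eq_self hκ

end Stmt14Aux

/-- local character of the pushout independence relation: given pure
submodules M₁, M₂ of N there are pure submodules M₀ ≤ M₁' with M₁ ≤ M₁', M₀ ≤ M₂,
|M₀| ≤ |M₁| + |R| + ℵ₀, such that the canonical map from the pushout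
(M₁' ⊕ M₂)/{(m,−m) : m ∈ M₀} to N, [(a,b)] ↦ a + b, is a pure embedding. -/
theorem stmt14 (R : Type u) [Ring R] (N : Type u) [AddCommGroup N] [Module R N]
    (M₁ M₂ : Submodule R N) (h₁ : IsPureSubmodule R M₁) (h₂ : IsPureSubmodule R M₂) :
    ∃ (M₀ M₁' : Submodule R N) (h01 : M₀ ≤ M₁') (h02 : M₀ ≤ M₂),
      M₁ ≤ M₁' ∧ IsPureSubmodule R M₀ ∧ IsPureSubmodule R M₁' ∧
      Cardinal.mk M₀ ≤ Cardinal.mk M₁ + Cardinal.mk R + Cardinal.aleph0 ∧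
      ∃ t : ((↥M₁' × ↥M₂) ⧸
          LinearMap.range
            ((Submodule.inclusion h01).prod (-(Submodule.inclusion h02)))) →ₗ[R] N,
        (∀ (x : M₁') (y : M₂),
          t (Submodule.Quotient.mk (x, y)) = (x : N) + (y : N)) ∧
        IsPureEmbedding R t := by
  classical
  set M₁' : Submodule R N := Stmt14Aux.Mbig M₁ M₂ with hM₁'
  set M₀ : Submodule R N := M₁' ⊓ M₂ with hM₀
  have h01 : M₀ ≤ M₁' := inf_le_left
  have h02 : M₀ ≤ M₂ := inf_le_right
  have hM1le : M₁ ≤ M₁' := Stmt14Aux.chain_le_Mbig M₁ M₂ 0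
  have hcard : Cardinal.mk M₀ ≤ Cardinal.mk M₁ + Cardinal.mk R + Cardinal.aleph0 := by
    refine le_trans ?_ (Stmt14Aux.mk_Mbig_le M₁ M₂)
    exact Cardinal.mk_le_mk_of_subset h01
  refine ⟨M₀, M₁', h01, h02, hM1le, Stmt14Aux.inf_pure M₁ M₂ h₂,
    Stmt14Aux.Mbig_pure M₁ M₂, hcard, ?_⟩
  set p : Submodule R (↥M₁' × ↥M₂) :=
    LinearMap.range ((Submodule.inclusion h01).prod (-(Submodule.inclusion h02))) with hp
  set f : (↥M₁' × ↥M₂) →ₗ[R] N := (M₁'.subtype).coprod M₂.subtype with hf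
  have hpf : p ≤ LinearMap.ker f := by
    rintro z ⟨m, rfl⟩
    simp [hf, LinearMap.mem_ker, LinearMap.coprod_apply, LinearMap.prod_apply,
      LinearMap.neg_apply]
  refine ⟨Submodule.liftQ p f hpf, fun x y => ?_, ?_, ?_⟩
  · rw [Submodule.liftQ_apply]
    rfl
  · rw [← LinearMap.ker_eq_bot]
    apply Submodule.ker_liftQ_eq_bot
    rintro ⟨x, y⟩ hxy
    have hxy' : (x : N) + (y : N) = 0 := hxy
    have hx2 : (x : N) ∈ M₂ := by
      have h : (x : N) = -(y : N) := eq_neg_of_add_eq_zero_left hxy'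
      rw [h]; exact M₂.neg_mem y.2
    refine ⟨⟨(x : N), Submodule.mem_inf.mpr ⟨x.2, hx2⟩⟩, ?_⟩
    have hy : (y : N) = -(x : N) := eq_neg_of_add_eq_zero_right hxy'
    apply Prod.ext
    · apply Subtype.ext
      rfl
    · apply Subtype.ext
      simp only [LinearMap.prod_apply, LinearMap.neg_apply, Pi.prod]
      rw [hy]
      rfl
  · have hr : LinearMap.range (Submodule.liftQ p f hpf) = M₁' ⊔ M₂ := by
      rw [Submodule.range_liftQ, hf, LinearMap.range_coprod, Submodule.range_subtype,
        Submodule.range_subtype]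
    rw [hr]
    exact Stmt14Aux.sup_pure M₁ M₂ h₂
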